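/- Assume λ < L_g and set γ := λ/L_g ∈ (0,1). There exists a constant C > 0, depending only on λ, L_g, L_f and M_f (in particular independent of h), such that for every h with 0 < h < 1/λ and 1/h a positive integer, the bounded fixed point u^h of A^h is uniformly γ-Hölder continuous in the first variable: for all x, y ∈ ℝ^ν and a ∈ I_h, |u^h(x,a) − u^h(y,a)| ≤ C·‖x − y‖^γ. -/

import Mathlib

noncomputable section

abbrev E (ν : ℕ) := EuclideanSpace ℝ (Fin ν)

/-- The discrete set of control values `I_h = {i·h : i = 0,…,N}`. -/
def Ih (h : ℝ) (N : ℕ) : Set ℝ := {r : ℝ | ∃ i : ℕ, i ≤ N ∧ r = i * h}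

/-- The discrete dynamic programming operator
`(A^h w)(x,a) = min_{b ∈ I_h, b ≥ a} [(1−λh)·w(x + h·g(x,a), b) + h·f(x,a)]`. -/
def Aop {ν : ℕ} (lam h : ℝ) (N : ℕ)
    (g : E ν → ℝ → E ν) (f : E ν → ℝ → ℝ)
    (w : E ν → ℝ → ℝ) (x : E ν) (a : ℝ) : ℝ :=
  sInf {v : ℝ | ∃ b ∈ Ih h N, a ≤ b ∧
    v = (1 - lam * h) * w (x + h • g x a) b + h * f x a}

lemma Ih_finite (h : ℝ) (N : ℕ) : (Ih h N).Finite := by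
  have hsub : Ih h N ⊆ (fun i : ℕ => (i : ℝ) * h) '' (Set.Iic N) := by
    rintro r ⟨i, hi, rfl⟩; exact ⟨i, hi, rfl⟩
  exact ((Set.finite_Iic N).image _).subset hsub

lemma Aop_spec {ν : ℕ} (lam h : ℝ) (N : ℕ)
    (g : E ν → ℝ → E ν) (f : E ν → ℝ → ℝ)
    (w : E ν → ℝ → ℝ) (x : E ν) (a : ℝ) (ha : a ∈ Ih h N) :
    (∃ b ∈ Ih h N, a ≤ b ∧ Aop lam h N g f w x a
        = (1 - lam * h) * w (x + h • g x a) b + h * f x a)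
    ∧ ∀ b ∈ Ih h N, a ≤ b →
        Aop lam h N g f w x a ≤ (1 - lam * h) * w (x + h • g x a) b + h * f x a := by
  set S : Set ℝ := {v : ℝ | ∃ b ∈ Ih h N, a ≤ b ∧
    v = (1 - lam * h) * w (x + h • g x a) b + h * f x a} with hS
  have himg : S = (fun b => (1 - lam * h) * w (x + h • g x a) b + h * f x a) ''
      (Ih h N ∩ Set.Ici a) := by
    ext v
    constructor
    · rintro ⟨b, hb, hab, rfl⟩; exact ⟨b, ⟨hb, hab⟩, rfl⟩
    · rintro ⟨b, ⟨hb, hab⟩, rfl⟩; exact ⟨b, hb, hab, rfl⟩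
  have hfin : S.Finite := by
    rw [himg]; exact ((Ih_finite h N).inter_of_left _).image _
  have hne : S.Nonempty := ⟨_, a, ha, le_refl a, rfl⟩
  have hmem : sInf S ∈ S := hne.csInf_mem hfin
  refine ⟨?_, ?_⟩
  · obtain ⟨b, hb, hab, heq⟩ := hmem
    exact ⟨b, hb, hab, heq⟩
  · intro b hb hab
    exact csInf_le hfin.bddBelow ⟨b, hb, hab, rfl⟩

set_option maxHeartbeats 1000000 in
theorem Ah_fixed_point_holder {ν : ℕ} (hν : 1 ≤ ν)
    (lam Lg Mg Lf Mf : ℝ) (hlam : 0 < lam)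
    (hLg : 0 < Lg) (hMg : 0 < Mg) (hLf : 0 < Lf) (hMf : 0 < Mf)
    (hlt : lam < Lg) :
    ∃ C : ℝ, 0 < C ∧
      ∀ (g : E ν → ℝ → E ν) (f : E ν → ℝ → ℝ),
        (∀ x x' : E ν, ∀ a ∈ Set.Icc (0:ℝ) 1, ∀ a' ∈ Set.Icc (0:ℝ) 1,
          ‖g x a - g x' a'‖ ≤ Lg * (‖x - x'‖ + |a - a'|)) →
        (∀ x : E ν, ∀ a ∈ Set.Icc (0:ℝ) 1, ‖g x a‖ ≤ Mg) →
        (∀ x x' : E ν, ∀ a ∈ Set.Icc (0:ℝ) 1, ∀ a' ∈ Set.Icc (0:ℝ) 1,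
          |f x a - f x' a'| ≤ Lf * (‖x - x'‖ + |a - a'|)) →
        (∀ x : E ν, ∀ a ∈ Set.Icc (0:ℝ) 1, |f x a| ≤ Mf) →
        ∀ (h : ℝ) (N : ℕ), 0 < h → h < 1 / lam → 0 < N → (N : ℝ) * h = 1 →
        ∀ u : E ν → ℝ → ℝ,
          (∃ M : ℝ, ∀ x : E ν, ∀ a ∈ Ih h N, |u x a| ≤ M) →
          (∀ x : E ν, ∀ a ∈ Ih h N, u x a = Aop lam h N g f u x a) →
          ∀ x y : E ν, ∀ a ∈ Ih h N,
            |u x a - u y a| ≤ C * ‖x - y‖ ^ (lam / Lg) := by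
  have hμ : 0 < Lg - lam := sub_pos.mpr hlt
  set μ : ℝ := Lg - lam with hμdef
  set γ : ℝ := lam / Lg with hγdef
  have hγ0 : 0 < γ := div_pos hlam hLg
  have hγ1 : γ < 1 := (div_lt_one hLg).mpr hlt
  set B : ℝ := Mf / lam with hBdef
  have hB : 0 < B := div_pos hMf hlam
  have hlamB : lam * B = Mf := by
    rw [hBdef]; field_simp
  refine ⟨Lf * Real.exp (μ / lam) / μ + 2 * B, by positivity, ?_⟩
  intro g f hg hgb hf hfb h N hh hhl hN hNh u hMex hu
  obtain ⟨M, hM⟩ := hMex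
  have hlh1 : lam * h < 1 := by
    have := (lt_div_iff₀ hlam).mp hhl
    linarith
  have hlh0 : 0 ≤ 1 - lam * h := by nlinarith
  have hIcc : ∀ a ∈ Ih h N, a ∈ Set.Icc (0:ℝ) 1 := by
    rintro a ⟨i, hi, rfl⟩
    constructor
    · positivity
    · rw [← hNh]
      have : (i : ℝ) ≤ (N : ℝ) := Nat.cast_le.mpr hi
      nlinarith
  -- boundedness of u by B
  have hub : ∀ x : E ν, ∀ a ∈ Ih h N, |u x a| ≤ B := by
    have key : ∀ n : ℕ, ∀ x : E ν, ∀ a ∈ Ih h N,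
        |u x a| ≤ (1 - lam * h) ^ n * max M 0 + B := by
      intro n
      induction n with
      | zero =>
        intro x a ha
        have h1 := hM x a ha
        have h2 : M ≤ max M 0 := le_max_left _ _
        simp only [pow_zero, one_mul]
        linarith
      | succ n ih =>
        intro x a ha
        obtain ⟨⟨b, hb, hab, heq⟩, -⟩ := Aop_spec lam h N g f u x a ha
        rw [hu x a ha, heq]
        have h1 : |u (x + h • g x a) b| ≤ (1 - lam * h) ^ n * max M 0 + B :=
          ih _ b hb
        have h2 : |f x a| ≤ Mf := hfb x a (hIcc a ha)
        have h3 : |(1 - lam * h) * u (x + h • g x a) b + h * f x a|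
            ≤ (1 - lam * h) * |u (x + h • g x a) b| + h * |f x a| := by
          calc |(1 - lam * h) * u (x + h • g x a) b + h * f x a|
              ≤ |(1 - lam * h) * u (x + h • g x a) b| + |h * f x a| := abs_add_le _ _
            _ = (1 - lam * h) * |u (x + h • g x a) b| + h * |f x a| := by
                rw [abs_mul, abs_mul, abs_of_nonneg hlh0, abs_of_nonneg hh.le]
        have hmax : (0:ℝ) ≤ max M 0 := le_max_right _ _
        have hpow : (0:ℝ) ≤ (1 - lam * h) ^ n := pow_nonneg hlh0 n
        calc |(1 - lam * h) * u (x + h • g x a) b + h * f x a|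
            ≤ (1 - lam * h) * ((1 - lam * h) ^ n * max M 0 + B) + h * Mf := by
              have e1 := mul_le_mul_of_nonneg_left h1 hlh0
              have e2 := mul_le_mul_of_nonneg_left h2 hh.le
              have e3 := abs_nonneg (u (x + h • g x a) b)
              linarith
          _ ≤ (1 - lam * h) ^ (n + 1) * max M 0 + B := by
              rw [pow_succ]
              have e4 : h * (lam * B) = h * Mf := by rw [hlamB]
              nlinarith [e4]
    intro x a ha
    have htend : Filter.Tendsto (fun n : ℕ => (1 - lam * h) ^ n * max M 0 + B)
        Filter.atTop (nhds (0 * max M 0 + B)) :=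
      ((tendsto_pow_atTop_nhds_zero_of_lt_one hlh0 (by nlinarith)).mul_const
        _).add_const _
    have hle := ge_of_tendsto' htend (fun n => key n x a ha)
    simpa using hle
  -- geometric-type sum
  set q : ℝ := (1 - lam * h) * (1 + Lg * h) with hqdef
  have hq0 : 0 ≤ q := by positivity
  set S : ℕ → ℝ := fun n => ∑ k ∈ Finset.range n, h * q ^ k with hSdef
  have hS0 : S 0 = 0 := by simp [hSdef]
  have hSrec : ∀ n, S (n + 1) = h + q * S n := by
    intro n
    simp only [hSdef]
    rw [Finset.sum_range_succ', Finset.mul_sum]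
    simp only [pow_zero, mul_one]
    rw [add_comm]
    congr 1
    exact Finset.sum_congr rfl (fun k _ => by ring)
  have hSnonneg : ∀ n, 0 ≤ S n := by
    intro n
    apply Finset.sum_nonneg
    intro k _
    positivity
  -- one-sided increment estimate
  have key2 : ∀ n : ℕ, ∀ x y : E ν, ∀ a ∈ Ih h N,
      u x a - u y a ≤ Lf * S n * ‖x - y‖ + 2 * B * (1 - lam * h) ^ n := by
    intro n
    induction n with
    | zero =>
      intro x y a ha
      have h1 := abs_le.mp (hub x a ha)
      have h2 := abs_le.mp (hub y a ha)
      rw [hS0]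
      simp only [pow_zero, mul_one, mul_zero, zero_mul, zero_add]
      linarith [h1.1, h1.2, h2.1, h2.2]
    | succ n ih =>
      intro x y a ha
      obtain ⟨⟨b, hb, hab, heqy⟩, -⟩ := Aop_spec lam h N g f u y a ha
      obtain ⟨-, hle⟩ := Aop_spec lam h N g f u x a ha
      have hux : u x a ≤ (1 - lam * h) * u (x + h • g x a) b + h * f x a := by
        rw [hu x a ha]; exact hle b hb hab
      have huy : u y a = (1 - lam * h) * u (y + h • g y a) b + h * f y a := by
        rw [hu y a ha]; exact heqy
      set x' := x + h • g x a with hx'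
      set y' := y + h • g y a with hy'
      have hdist : ‖x' - y'‖ ≤ (1 + Lg * h) * ‖x - y‖ := by
        have hxy' : x' - y' = (x - y) + h • (g x a - g y a) := by
          rw [hx', hy', smul_sub]; abel
        rw [hxy']
        calc ‖(x - y) + h • (g x a - g y a)‖
            ≤ ‖x - y‖ + ‖h • (g x a - g y a)‖ := norm_add_le _ _
          _ = ‖x - y‖ + h * ‖g x a - g y a‖ := by
              rw [norm_smul, Real.norm_eq_abs, abs_of_nonneg hh.le]
          _ ≤ ‖x - y‖ + h * (Lg * (‖x - y‖ + |a - a|)) := by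
              have e := mul_le_mul_of_nonneg_left
                (hg x y a (hIcc a ha) a (hIcc a ha)) hh.le
              linarith
          _ = (1 + Lg * h) * ‖x - y‖ := by
              rw [sub_self, abs_zero]; ring
      have hfd : f x a - f y a ≤ Lf * ‖x - y‖ := by
        have hff := hf x y a (hIcc a ha) a (hIcc a ha)
        have h2 := (abs_le.mp hff).2
        rw [sub_self, abs_zero] at h2
        linarith
      have hih := ih x' y' b hb
      have hnn : (0:ℝ) ≤ ‖x - y‖ := norm_nonneg _
      have step1 : u x a - u y a
          ≤ (1 - lam * h) * (u x' b - u y' b) + h * (f x a - f y a) := by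
        have e1 := huy.le
        have e2 := huy.ge
        linarith [hux]
      have hLfS : (0:ℝ) ≤ Lf * S n := by
        have := hSnonneg n
        positivity
      have step2 : u x' b - u y' b ≤ Lf * S n * ((1 + Lg * h) * ‖x - y‖)
          + 2 * B * (1 - lam * h) ^ n := by
        linarith [mul_le_mul_of_nonneg_left hdist hLfS, hih]
      calc u x a - u y a
          ≤ (1 - lam * h) * (Lf * S n * ((1 + Lg * h) * ‖x - y‖)
              + 2 * B * (1 - lam * h) ^ n) + h * (Lf * ‖x - y‖) := by
            have e1 := mul_le_mul_of_nonneg_left step2 hlh0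
            have e2 := mul_le_mul_of_nonneg_left hfd hh.le
            linarith [step1]
        _ = Lf * S (n + 1) * ‖x - y‖ + 2 * B * (1 - lam * h) ^ (n + 1) := by
            rw [hSrec n, pow_succ, hqdef]
            ring
  have keyabs : ∀ n : ℕ, ∀ x y : E ν, ∀ a ∈ Ih h N,
      |u x a - u y a| ≤ Lf * S n * ‖x - y‖ + 2 * B * (1 - lam * h) ^ n := by
    intro n x y a ha
    rw [abs_sub_le_iff]
    refine ⟨key2 n x y a ha, ?_⟩
    have := key2 n y x a ha
    rwa [norm_sub_rev] at this
  -- exponential bounds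
  have hq_exp : q ≤ Real.exp (μ * h) := by
    have h1 : 1 - lam * h ≤ Real.exp (-(lam * h)) := by
      have := Real.add_one_le_exp (-(lam * h)); linarith
    have h2 : 1 + Lg * h ≤ Real.exp (Lg * h) := by
      have := Real.add_one_le_exp (Lg * h); linarith
    have h3 : (0:ℝ) ≤ 1 + Lg * h := by positivity
    calc q ≤ Real.exp (-(lam * h)) * Real.exp (Lg * h) :=
          mul_le_mul h1 h2 h3 (Real.exp_nonneg _)
      _ = Real.exp (μ * h) := by
          rw [← Real.exp_add, hμdef]; ring_nf
  have hSb : ∀ n : ℕ, μ * S n ≤ Real.exp (μ * h * n) - 1 := by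
    intro n
    induction n with
    | zero => simp [hS0]
    | succ n ih =>
      rw [hSrec n]
      have hE1 : μ * h + 1 ≤ Real.exp (μ * h) := by
        have := Real.add_one_le_exp (μ * h); linarith
      have hEn : 1 ≤ Real.exp (μ * h * n) := Real.one_le_exp (by positivity)
      have hstep : Real.exp (μ * h * (n + 1 : ℕ))
          = Real.exp (μ * h) * Real.exp (μ * h * n) := by
        rw [← Real.exp_add]
        congr 1
        push_cast
        ring
      rw [hstep]
      have hmul : q * (μ * S n) ≤ Real.exp (μ * h) * (Real.exp (μ * h * n) - 1) := by
        have hμS : 0 ≤ μ * S n := by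
          have := hSnonneg n
          positivity
        exact mul_le_mul hq_exp ih hμS (Real.exp_nonneg _)
      linarith [hmul, hE1]
  have hpow_exp : ∀ n : ℕ, (1 - lam * h) ^ n ≤ Real.exp (-(lam * h * n)) := by
    intro n
    have h1 : 1 - lam * h ≤ Real.exp (-(lam * h)) := by
      have := Real.add_one_le_exp (-(lam * h)); linarith
    calc (1 - lam * h) ^ n ≤ Real.exp (-(lam * h)) ^ n := pow_le_pow_left₀ hlh0 h1 n
      _ = Real.exp (-(lam * h * n)) := by
          rw [← Real.exp_nat_mul]; congr 1; ring
  -- final estimate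
  intro x y a ha
  set r : ℝ := ‖x - y‖ with hrdef
  have hr0 : 0 ≤ r := norm_nonneg _
  rcases eq_or_lt_of_le hr0 with hr | hr
  · -- r = 0, so x = y
    have hxy : x = y := by
      have h0 : ‖x - y‖ = 0 := hr.symm
      rwa [norm_sub_eq_zero_iff] at h0
    rw [hxy, sub_self, abs_zero, ← hr, Real.zero_rpow (ne_of_gt hγ0)]
    simp
  rcases le_or_gt 1 r with hr1 | hr1
  · -- r ≥ 1
    have h0 := keyabs 0 x y a ha
    rw [hS0] at h0
    simp only [mul_zero, zero_mul, pow_zero, mul_one, zero_add] at h0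
    have hrγ : 1 ≤ r ^ γ := Real.one_le_rpow hr1 hγ0.le
    have hpos : 0 < Lf * Real.exp (μ / lam) / μ := by positivity
    have e1 := mul_le_mul_of_nonneg_left hrγ (by positivity : (0:ℝ) ≤ 2 * B)
    have e2 : 0 ≤ Lf * Real.exp (μ / lam) / μ * r ^ γ :=
      mul_nonneg hpos.le (by positivity)
    nlinarith [e1, e2]
  · -- 0 < r < 1
    have hlogr : Real.log r < 0 := Real.log_neg hr hr1
    set t : ℝ := -Real.log r / Lg with htdef
    have ht0 : 0 < t := by
      apply div_pos _ hLg; linarith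
    set n : ℕ := ⌈t / h⌉₊ with hndef
    have hn1 : t ≤ h * n := by
      have hc := Nat.le_ceil (t / h)
      calc t = h * (t / h) := by field_simp
        _ ≤ h * n := mul_le_mul_of_nonneg_left hc hh.le
    have hn2 : h * n ≤ t + 1 / lam := by
      have hceil : ((n : ℕ) : ℝ) < t / h + 1 := Nat.ceil_lt_add_one (by positivity)
      have h2 : h * (n : ℝ) < h * (t / h + 1) := mul_lt_mul_of_pos_left hceil hh
      have h3 : h * (t / h + 1) = t + h := by field_simp
      have h4 : h * (n : ℝ) < t + h := by rw [← h3]; exact h2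
      linarith [hhl.le]
    have hexp1 : Real.exp (-(lam * h * n)) ≤ r ^ γ := by
      rw [Real.rpow_def_of_pos hr]
      apply Real.exp_le_exp.mpr
      have heq : Real.log r * γ = -(lam * t) := by
        rw [htdef, hγdef]; field_simp
      rw [heq]
      linarith [mul_le_mul_of_nonneg_left hn1 hlam.le]
    have hexp2 : Real.exp (μ * h * n) ≤ Real.exp (μ / lam) * r ^ (γ - 1) := by
      rw [Real.rpow_def_of_pos hr, ← Real.exp_add]
      apply Real.exp_le_exp.mpr
      have heq : Real.log r * (γ - 1) = μ * t := by
        rw [htdef, hγdef, hμdef]; field_simp; ring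
      rw [heq]
      calc μ * h * n = μ * (h * n) := by ring
        _ ≤ μ * (t + 1 / lam) := mul_le_mul_of_nonneg_left hn2 hμ.le
        _ = μ / lam + μ * t := by field_simp; ring
    have hrγ1 : r ^ (γ - 1) * r = r ^ γ := by
      nth_rewrite 2 [← Real.rpow_one r]
      rw [← Real.rpow_add hr]; ring_nf
    have hk := keyabs n x y a ha
    rw [← hrdef] at hk
    have hSle : S n ≤ Real.exp (μ / lam) * r ^ (γ - 1) / μ := by
      rw [le_div_iff₀ hμ]
      calc S n * μ = μ * S n := mul_comm _ _
        _ ≤ Real.exp (μ * h * n) - 1 := hSb n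
        _ ≤ Real.exp (μ / lam) * r ^ (γ - 1) := by linarith [hexp2]
    have hterm1 : Lf * S n * r ≤ Lf * Real.exp (μ / lam) / μ * r ^ γ := by
      calc Lf * S n * r ≤ Lf * (Real.exp (μ / lam) * r ^ (γ - 1) / μ) * r :=
            mul_le_mul_of_nonneg_right
              (mul_le_mul_of_nonneg_left hSle hLf.le) hr.le
        _ = Lf * Real.exp (μ / lam) / μ * (r ^ (γ - 1) * r) := by ring
        _ = Lf * Real.exp (μ / lam) / μ * r ^ γ := by rw [hrγ1]
    have hterm2 : 2 * B * (1 - lam * h) ^ n ≤ 2 * B * r ^ γ := by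
      have hple : (1 - lam * h) ^ n ≤ r ^ γ := le_trans (hpow_exp n) hexp1
      exact mul_le_mul_of_nonneg_left hple (by positivity)
    calc |u x a - u y a| ≤ Lf * S n * r + 2 * B * (1 - lam * h) ^ n := hk
      _ ≤ Lf * Real.exp (μ / lam) / μ * r ^ γ + 2 * B * r ^ γ := by
          linarith
      _ = (Lf * Real.exp (μ / lam) / μ + 2 * B) * r ^ γ := by ring
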